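/- arXiv:2401.16885 — 2 statements merged into one kernel-verified Lean document; each statement's English description precedes it below -/
import Mathlib

section
/- Let α: [0,T] → [0, α*] with α* < 1 be twice continuously differentiable, α(0) = 0, with |α'|, |α''| ≤ Q* on [0,T]. Define g(t) = d/dt [ t^{-α(t)} / Γ(1 - α(t)) ] for t ∈ (0,T]. Then there exists Q = Q(α*, Q*, T) with |g(t)| ≤ Q |ln t| for all t ∈ (0, min(T,1/2)]. -/
set_option maxHeartbeats 1000000

open Real Set

/-- Let `α : [0,T] → [0,α*]`, `α* < 1`, be twice continuously differentiable with `α 0 = 0`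
and `|α'|, |α''| ≤ Q*` on `[0,T]`. With `g t = d/dt (t^(-α t) / Γ(1 - α t))`, there is
`Q = Q(α*,Q*,T)` such that `|g t| ≤ Q |log t|` on `(0, min T (1/2)]`. -/
theorem stmt_11 (T αstar Qstar : ℝ) (hT : 0 < T) (hαstar0 : 0 ≤ αstar) (hαstar : αstar < 1)
    (hQ : 0 ≤ Qstar) (α α' α'' : ℝ → ℝ)
    (hderiv : ∀ t ∈ Set.Icc (0 : ℝ) T, HasDerivAt α (α' t) t)
    (hderiv' : ∀ t ∈ Set.Icc (0 : ℝ) T, HasDerivAt α' (α'' t) t)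
    (hcont : ContinuousOn α'' (Set.Icc (0 : ℝ) T))
    (h0 : α 0 = 0)
    (hrange : ∀ t ∈ Set.Icc (0 : ℝ) T, 0 ≤ α t ∧ α t ≤ αstar)
    (hb1 : ∀ t ∈ Set.Icc (0 : ℝ) T, |α' t| ≤ Qstar)
    (hb2 : ∀ t ∈ Set.Icc (0 : ℝ) T, |α'' t| ≤ Qstar) :
    ∃ Q > 0, ∀ t ∈ Set.Ioc (0 : ℝ) (min T (1 / 2)),
      |deriv (fun τ => Real.exp (-(α τ) * Real.log τ) / Real.Gamma (1 - α τ)) t| ≤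
        Q * |Real.log t| := by
  -- the compact interval where 1 - α t lives
  set K : Set ℝ := Set.Icc (1 - αstar) 1 with hK
  have hKc : IsCompact K := isCompact_Icc
  have hKne : K.Nonempty := ⟨1, by constructor <;> linarith⟩
  have hKpos : ∀ x ∈ K, 0 < x := fun x hx => by
    have := hx.1; linarith
  -- complex Gamma is differentiable on the right half plane
  have hne : ∀ x : ℝ, 0 < x → ∀ m : ℕ, (x : ℂ) ≠ -m := by
    intro x hx m hm
    rw [Complex.ext_iff] at hm
    simp at hm
    have : (0:ℝ) ≤ (m:ℝ) := Nat.cast_nonneg m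
    linarith [hm]
  -- real Gamma derivative function
  set hR : ℝ → ℝ := fun x => (deriv Complex.Gamma (x : ℂ)).re with hhR
  have hGammaDeriv : ∀ x : ℝ, 0 < x → HasDerivAt Real.Gamma (hR x) x := by
    intro x hx
    have hd := (Complex.differentiableAt_Gamma _ (hne x hx)).hasDerivAt
    have h2 := hd.real_of_complex
    have heq : (fun y : ℝ => (Complex.Gamma (y : ℂ)).re) = Real.Gamma := by
      funext y; rw [Complex.Gamma_ofReal]; simp
    rwa [heq] at h2
  -- continuity of hR on K
  have hU : IsOpen {s : ℂ | 0 < s.re} := isOpen_lt continuous_const Complex.continuous_re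
  have hdiff : DifferentiableOn ℂ Complex.Gamma {s : ℂ | 0 < s.re} := by
    intro s hs
    refine (Complex.differentiableAt_Gamma _ ?_).differentiableWithinAt
    intro m hm
    have : (0:ℝ) < s.re := hs
    rw [hm] at this
    simp at this
    have : (0:ℝ) ≤ (m:ℝ) := Nat.cast_nonneg m
    linarith
  have hAn := (hdiff.analyticOnNhd hU).deriv
  have hcontD : ContinuousOn (deriv Complex.Gamma) {s : ℂ | 0 < s.re} := hAn.continuousOn
  have hRcont : ContinuousOn hR K := by
    apply Complex.continuous_re.comp_continuousOn
    apply hcontD.comp Complex.continuous_ofReal.continuousOn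
    intro x hx
    simpa using hKpos x hx
  obtain ⟨C', hC'⟩ := hKc.exists_bound_of_continuousOn hRcont
  have hC'0 : 0 ≤ C' := le_trans (norm_nonneg _) (hC' 1 ⟨by linarith, le_rfl⟩)
  -- continuity of Gamma on K
  have hΓcont : ContinuousOn Real.Gamma K := by
    intro x hx
    exact ((hGammaDeriv x (hKpos x hx)).differentiableAt.continuousAt).continuousWithinAt
  obtain ⟨x₀, hx₀, hmin⟩ := hKc.exists_isMinOn hKne hΓcont
  obtain ⟨x₁, hx₁, hmax⟩ := hKc.exists_isMaxOn hKne hΓcont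
  set m := Real.Gamma x₀ with hm
  set M := Real.Gamma x₁ with hMdef
  have hmpos : 0 < m := Real.Gamma_pos_of_pos (hKpos x₀ hx₀)
  have hM0 : 0 < M := Real.Gamma_pos_of_pos (hKpos x₁ hx₁)
  -- constants
  set E₀ : ℝ := Real.exp Qstar with hE₀
  have hE₀pos : 0 < E₀ := Real.exp_pos _
  set A : ℝ := E₀ * Qstar * M / m ^ 2 with hA
  set B : ℝ := (E₀ * Qstar * M + E₀ * (C' * Qstar)) / m ^ 2 with hB
  have hA0 : 0 ≤ A := by positivity
  have hB0 : 0 ≤ B := by positivity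
  have hlog2 : (0:ℝ) < Real.log 2 := Real.log_pos (by norm_num)
  refine ⟨A + B / Real.log 2 + 1, by positivity, ?_⟩
  intro t ht
  obtain ⟨ht0, htm⟩ := ht
  have htT : t ≤ T := le_trans htm (min_le_left _ _)
  have ht2 : t ≤ 1 / 2 := le_trans htm (min_le_right _ _)
  have htmem : t ∈ Set.Icc (0:ℝ) T := ⟨ht0.le, htT⟩
  have hlt1 : t < 1 := by linarith
  have hlogneg : Real.log t < 0 := Real.log_neg ht0 hlt1
  set L : ℝ := |Real.log t| with hL
  have hLeq : L = -Real.log t := abs_of_neg hlogneg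
  have hL0 : 0 ≤ L := abs_nonneg _
  have hLlog2 : Real.log 2 ≤ L := by
    rw [hLeq]
    have : Real.log t ≤ Real.log (1/2) := Real.log_le_log ht0 ht2
    rw [Real.log_div one_ne_zero (by norm_num), Real.log_one] at this
    linarith
  -- bounds on α
  have hα0t : 0 ≤ α t := (hrange t htmem).1
  have hαstar_t : α t ≤ αstar := (hrange t htmem).2
  have hα't : |α' t| ≤ Qstar := hb1 t htmem
  -- α t ≤ Qstar * t via MVT
  have hαt_le : α t ≤ Qstar * t := by
    have := (convex_Icc (0:ℝ) T).norm_image_sub_le_of_norm_hasDerivWithin_le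
      (f := α) (f' := α') (C := Qstar)
      (fun x hx => (hderiv x hx).hasDerivWithinAt)
      (fun x hx => by simpa using hb1 x hx) (Set.left_mem_Icc.2 hT.le) htmem
    rw [h0, sub_zero, sub_zero] at this
    calc α t ≤ |α t| := le_abs_self _
      _ ≤ Qstar * |t| := by simpa using this
      _ = Qstar * t := by rw [abs_of_pos ht0]
  -- t * (-log t) ≤ 1
  have htlog : t * (-Real.log t) ≤ 1 := by
    have h1 : -Real.log t = Real.log t⁻¹ := (Real.log_inv t).symm
    have h2 : Real.log t⁻¹ ≤ t⁻¹ - 1 := Real.log_le_sub_one_of_pos (by positivity)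
    calc t * (-Real.log t) ≤ t * t⁻¹ := by
          rw [h1]; exact mul_le_mul_of_nonneg_left (by linarith) ht0.le
      _ = 1 := mul_inv_cancel₀ ht0.ne'
  -- E bound
  set E : ℝ := Real.exp (-(α t) * Real.log t) with hEdef
  have hEpos : 0 < E := Real.exp_pos _
  have hEle : E ≤ E₀ := by
    rw [hEdef, hE₀]
    apply Real.exp_le_exp.2
    have : -(α t) * Real.log t = α t * (-Real.log t) := by ring
    rw [this]
    calc α t * (-Real.log t) ≤ Qstar * t * (-Real.log t) := by
          apply mul_le_mul_of_nonneg_right hαt_le (by linarith)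
      _ = Qstar * (t * (-Real.log t)) := by ring
      _ ≤ Qstar * 1 := mul_le_mul_of_nonneg_left htlog hQ
      _ = Qstar := mul_one _
  -- 1 - α t ∈ K
  have h1αK : (1 - α t) ∈ K := ⟨by linarith, by linarith⟩
  have h1αpos : 0 < 1 - α t := hKpos _ h1αK
  set V : ℝ := Real.Gamma (1 - α t) with hVdef
  have hmV : m ≤ V := hmin h1αK
  have hVM : V ≤ M := hmax h1αK
  have hVpos : 0 < V := lt_of_lt_of_le hmpos hmV
  -- derivative computation
  have hαd : HasDerivAt α (α' t) t := hderiv t htmem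
  have hu : HasDerivAt (fun τ => -(α τ) * Real.log τ)
      (-(α' t) * Real.log t + -(α t) * t⁻¹) t :=
    (hαd.neg.mul (Real.hasDerivAt_log ht0.ne'))
  have hE' : HasDerivAt (fun τ => Real.exp (-(α τ) * Real.log τ))
      (E * (-(α' t) * Real.log t + -(α t) * t⁻¹)) t := by
    have := hu.exp
    convert this using 1
    try ring
  have hin : HasDerivAt (fun τ => 1 - α τ) (-(α' t)) t := hαd.const_sub 1
  have hVd : HasDerivAt (fun τ => Real.Gamma (1 - α τ)) (hR (1 - α t) * (-(α' t))) t :=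
    by have := (hGammaDeriv (1 - α t) h1αpos).comp t hin; exact this
  have hfd : HasDerivAt (fun τ => Real.exp (-(α τ) * Real.log τ) / Real.Gamma (1 - α τ))
      ((E * (-(α' t) * Real.log t + -(α t) * t⁻¹) * V - E * (hR (1 - α t) * (-(α' t)))) / V ^ 2)
      t := hE'.div hVd hVpos.ne'
  rw [hfd.deriv]
  -- numerator bound
  have hαtdiv : α t * t⁻¹ ≤ Qstar := by
    calc α t * t⁻¹ ≤ Qstar * t * t⁻¹ := mul_le_mul_of_nonneg_right hαt_le (by positivity)
      _ = Qstar * (t * t⁻¹) := by ring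
      _ = Qstar := by rw [mul_inv_cancel₀ ht0.ne', mul_one]
  have hu'bound : |(-(α' t) * Real.log t + -(α t) * t⁻¹)| ≤ Qstar * L + Qstar := by
    calc |(-(α' t) * Real.log t + -(α t) * t⁻¹)|
        ≤ |(-(α' t) * Real.log t)| + |(-(α t) * t⁻¹)| := abs_add_le _ _
      _ ≤ Qstar * L + Qstar := by
          apply add_le_add
          · rw [abs_mul, abs_neg]
            exact mul_le_mul hα't le_rfl (abs_nonneg _) hQ
          · rw [abs_mul, abs_neg, abs_of_nonneg hα0t, abs_of_nonneg (by positivity : (0:ℝ) ≤ t⁻¹)]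
            exact hαtdiv
  have hRb : |hR (1 - α t)| ≤ C' := by simpa using hC' _ h1αK
  have hnum : |E * (-(α' t) * Real.log t + -(α t) * t⁻¹) * V - E * (hR (1 - α t) * (-(α' t)))|
      ≤ E₀ * (Qstar * L + Qstar) * M + E₀ * (C' * Qstar) := by
    calc |E * (-(α' t) * Real.log t + -(α t) * t⁻¹) * V - E * (hR (1 - α t) * (-(α' t)))|
        ≤ |E * (-(α' t) * Real.log t + -(α t) * t⁻¹) * V| + |E * (hR (1 - α t) * (-(α' t)))| :=
          abs_sub _ _
      _ ≤ E₀ * (Qstar * L + Qstar) * M + E₀ * (C' * Qstar) := by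
          apply add_le_add
          · rw [abs_mul, abs_mul, abs_of_pos hEpos, abs_of_pos hVpos]
            apply mul_le_mul _ hVM hVpos.le (by positivity)
            exact mul_le_mul hEle hu'bound (abs_nonneg _) hE₀pos.le
          · rw [abs_mul, abs_mul, abs_neg, abs_of_pos hEpos]
            apply mul_le_mul hEle _ (by positivity) hE₀pos.le
            exact mul_le_mul hRb hα't (abs_nonneg _) hC'0
  have hdenom : m ^ 2 ≤ V ^ 2 := by nlinarith
  have hfinal : |(E * (-(α' t) * Real.log t + -(α t) * t⁻¹) * V - E * (hR (1 - α t) * (-(α' t)))) / V ^ 2|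
      ≤ (E₀ * (Qstar * L + Qstar) * M + E₀ * (C' * Qstar)) / m ^ 2 := by
    rw [abs_div, abs_of_pos (by positivity : (0:ℝ) < V ^ 2)]
    exact div_le_div₀ (by positivity) hnum (by positivity) hdenom
  refine le_trans hfinal ?_
  -- final arithmetic: (E₀(Qstar L + Qstar)M + E₀ C' Qstar)/m² = A*L + B ≤ Q*L
  have hexpand : (E₀ * (Qstar * L + Qstar) * M + E₀ * (C' * Qstar)) / m ^ 2 = A * L + B := by
    rw [hA, hB]; ring
  rw [hexpand]
  have hBL : B ≤ B / Real.log 2 * L := by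
    rw [div_mul_eq_mul_div, le_div_iff₀ hlog2]
    exact mul_le_mul_of_nonneg_left hLlog2 hB0
  have hLpos' : 0 ≤ L := hL0
  calc A * L + B ≤ A * L + B / Real.log 2 * L := by linarith
    _ ≤ (A + B / Real.log 2 + 1) * L := by nlinarith
end

section
/- Under the assumptions of the previous setup, if additionally α'(0) = 0 and α''(0) ≠ 0, then g(t) = d/dt[t^{-α(t)}/Γ(1-α(t))] is bounded on (0,T]: |g(t)| ≤ Q for some Q = Q(α*, Q*, T). -/
lemma gamma_deriv_exists : ∃ φ : ℝ → ℝ,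
    (∀ x : ℝ, 0 < x → HasDerivAt Real.Gamma (φ x) x) ∧
    ContinuousOn φ (Set.Ioi 0) := by
  have hU : IsOpen {s : ℂ | 0 < s.re} := isOpen_lt continuous_const Complex.continuous_re
  have hne : ∀ s : ℂ, 0 < s.re → ∀ m : ℕ, s ≠ -m := by
    intro s hs m h
    rw [h] at hs
    simp only [Complex.neg_re, Complex.natCast_re] at hs
    have : (0:ℝ) ≤ (m:ℝ) := Nat.cast_nonneg m
    linarith
  have hd : DifferentiableOn ℂ Complex.Gamma {s : ℂ | 0 < s.re} :=
    fun s hs => (Complex.differentiableAt_Gamma s (hne s hs)).differentiableWithinAt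
  have han := ((hd.analyticOnNhd hU).deriv).continuousOn
  refine ⟨fun x => (deriv Complex.Gamma x).re, ?_, ?_⟩
  · intro x hx
    have h1 : ∀ m : ℕ, (x:ℂ) ≠ -m := hne x (by simpa using hx)
    exact ((Complex.differentiableAt_Gamma x h1).hasDerivAt).real_of_complex
  · refine Complex.continuous_re.comp_continuousOn
      (han.comp Complex.continuous_ofReal.continuousOn ?_)
    intro x hx
    simpa using hx

/-- Under the same setup as before, if additionally `α' 0 = 0` and `α'' 0 ≠ 0`, then
`g t = d/dt (t^(-α t) / Γ(1 - α t))` is bounded on `(0,T]`. -/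
theorem stmt_12 (T αstar Qstar : ℝ) (hT : 0 < T) (hαstar0 : 0 ≤ αstar) (hαstar : αstar < 1)
    (hQ : 0 ≤ Qstar) (α α' α'' : ℝ → ℝ)
    (hderiv : ∀ t ∈ Set.Icc (0 : ℝ) T, HasDerivAt α (α' t) t)
    (hderiv' : ∀ t ∈ Set.Icc (0 : ℝ) T, HasDerivAt α' (α'' t) t)
    (hcont : ContinuousOn α'' (Set.Icc (0 : ℝ) T))
    (h0 : α 0 = 0) (h0' : α' 0 = 0) (h0'' : α'' 0 ≠ 0)
    (hrange : ∀ t ∈ Set.Icc (0 : ℝ) T, 0 ≤ α t ∧ α t ≤ αstar)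
    (hb1 : ∀ t ∈ Set.Icc (0 : ℝ) T, |α' t| ≤ Qstar)
    (hb2 : ∀ t ∈ Set.Icc (0 : ℝ) T, |α'' t| ≤ Qstar) :
    ∃ Q > 0, ∀ t ∈ Set.Ioc (0 : ℝ) T,
      |deriv (fun τ => Real.exp (-(α τ) * Real.log τ) / Real.Gamma (1 - α τ)) t| ≤ Q := by
  obtain ⟨φ, hφd, hφc⟩ := gamma_deriv_exists
  -- subset lemma
  have hsub : ∀ t ∈ Set.Icc (0:ℝ) T, Set.Icc (0:ℝ) t ⊆ Set.Icc (0:ℝ) T :=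
    fun t ht => Set.Icc_subset_Icc le_rfl ht.2
  -- |α' t| ≤ Qstar * t
  have hα'b : ∀ t ∈ Set.Icc (0:ℝ) T, |α' t| ≤ Qstar * t := by
    intro t ht
    have h := Convex.norm_image_sub_le_of_norm_hasDerivWithin_le
      (f := α') (f' := α'') (s := Set.Icc 0 t) (C := Qstar)
      (fun x hx => (hderiv' x (hsub t ht hx)).hasDerivWithinAt)
      (fun x hx => by rw [Real.norm_eq_abs]; exact hb2 x (hsub t ht hx))
      (convex_Icc 0 t) (Set.left_mem_Icc.mpr ht.1) (Set.right_mem_Icc.mpr ht.1)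
    simp only [h0', sub_zero, Real.norm_eq_abs] at h
    calc |α' t| ≤ Qstar * |t| := h
      _ = Qstar * t := by rw [abs_of_nonneg ht.1]
  -- |α t| ≤ Qstar * t * t
  have hαb : ∀ t ∈ Set.Icc (0:ℝ) T, |α t| ≤ Qstar * t * t := by
    intro t ht
    have h := Convex.norm_image_sub_le_of_norm_hasDerivWithin_le
      (f := α) (f' := α') (s := Set.Icc 0 t) (C := Qstar * t)
      (fun x hx => (hderiv x (hsub t ht hx)).hasDerivWithinAt)
      (fun x hx => by
        rw [Real.norm_eq_abs]
        refine (hα'b x (hsub t ht hx)).trans ?_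
        exact mul_le_mul_of_nonneg_left hx.2 hQ)
      (convex_Icc 0 t) (Set.left_mem_Icc.mpr ht.1) (Set.right_mem_Icc.mpr ht.1)
    simp only [h0, sub_zero, Real.norm_eq_abs] at h
    calc |α t| ≤ Qstar * t * |t| := h
      _ = Qstar * t * t := by rw [abs_of_nonneg ht.1]
  -- compact interval for Gamma
  set K : Set ℝ := Set.Icc (1 - αstar) 1 with hKdef
  have hKsub : K ⊆ Set.Ioi (0:ℝ) := fun x hx => by
    simp only [Set.mem_Ioi]; have := hx.1; simp only [hKdef, Set.mem_Icc] at hx ⊢; linarith [hx.1]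
  have hKc : IsCompact K := isCompact_Icc
  have h1K : (1:ℝ) ∈ K := by constructor <;> linarith
  obtain ⟨M, hM⟩ := hKc.exists_bound_of_continuousOn (hφc.mono hKsub)
  have hM0 : 0 ≤ M := le_trans (norm_nonneg _) (hM 1 h1K)
  have hGc : ContinuousOn Real.Gamma K := by
    intro x hx
    have hxpos : (0:ℝ) < x := hKsub hx
    refine (Real.differentiableAt_Gamma ?_).continuousAt.continuousWithinAt
    intro m hm
    rw [hm] at hxpos
    have : (0:ℝ) ≤ (m:ℝ) := Nat.cast_nonneg m
    linarith
  obtain ⟨x₀, hx₀K, hx₀min⟩ := hKc.exists_isMinOn ⟨1, h1K⟩ hGc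
  set c : ℝ := Real.Gamma x₀ with hcdef
  have hc : 0 < c := Real.Gamma_pos_of_pos (hKsub hx₀K)
  obtain ⟨G, hG⟩ := hKc.exists_bound_of_continuousOn hGc
  have hG0 : 0 ≤ G := le_trans (norm_nonneg _) (hG 1 h1K)
  -- log bound constant
  set L : ℝ := 1 + T * (1 + |Real.log T|) with hLdef
  have hL1 : (1:ℝ) ≤ L := by
    have h1 : 0 ≤ T * (1 + |Real.log T|) := by positivity
    simp only [hLdef]; linarith
  set B : ℝ := Qstar * L + Qstar * T with hBdef
  have hB0 : 0 ≤ B := by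
    have : 0 ≤ Qstar * L := mul_nonneg hQ (by linarith)
    have : 0 ≤ Qstar * T := mul_nonneg hQ hT.le
    simp only [hBdef]; positivity
  set Q : ℝ := (Real.exp Qstar * B * G + Real.exp Qstar * (M * (Qstar * T))) / c^2 + 1 with hQdef
  have hQpos : 0 < Q := by
    have h1 : 0 ≤ Real.exp Qstar * B * G :=
      mul_nonneg (mul_nonneg (Real.exp_pos _).le hB0) hG0
    have h2 : 0 ≤ Real.exp Qstar * (M * (Qstar * T)) :=
      mul_nonneg (Real.exp_pos _).le (mul_nonneg hM0 (mul_nonneg hQ hT.le))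
    have h3 : 0 ≤ (Real.exp Qstar * B * G + Real.exp Qstar * (M * (Qstar * T))) / c^2 :=
      div_nonneg (by linarith) (by positivity)
    simp only [hQdef]; linarith
  refine ⟨Q, hQpos, ?_⟩
  rintro t ⟨ht0, htT⟩
  have htmem : t ∈ Set.Icc (0:ℝ) T := ⟨ht0.le, htT⟩
  have hαt0 : 0 ≤ α t := (hrange t htmem).1
  have hαts : α t ≤ αstar := (hrange t htmem).2
  have h1α : 0 < 1 - α t := by linarith
  have hKt : 1 - α t ∈ K := ⟨by linarith, by linarith⟩
  -- compute the derivative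
  have hin : HasDerivAt (fun τ => -α τ * Real.log τ)
      (-α' t * Real.log t + -α t * t⁻¹) t :=
    ((hderiv t htmem).neg.mul (Real.hasDerivAt_log ht0.ne'))
  have hN : HasDerivAt (fun τ => Real.exp (-α τ * Real.log τ))
      (Real.exp (-α t * Real.log t) * (-α' t * Real.log t + -α t * t⁻¹)) t := hin.exp
  have hGin : HasDerivAt (fun τ => 1 - α τ) (0 - α' t) t :=
    (hasDerivAt_const t 1).sub (hderiv t htmem)
  have hDcomp : HasDerivAt (fun τ => Real.Gamma (1 - α τ)) (φ (1 - α t) * (0 - α' t)) t :=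
    by have := (hφd (1 - α t) h1α).comp t hGin; exact this
  have hDne : Real.Gamma (1 - α t) ≠ 0 := (Real.Gamma_pos_of_pos h1α).ne'
  have hF := hN.div hDcomp hDne
  rw [show deriv (fun τ => Real.exp (-α τ * Real.log τ) / Real.Gamma (1 - α τ)) t = _ from hF.deriv]
  -- bounds on the pieces
  have hα2 : α t ≤ Qstar * t * t := le_trans (le_abs_self _) (hαb t htmem)
  have hNle : Real.exp (-α t * Real.log t) ≤ Real.exp Qstar := by
    rw [Real.exp_le_exp]
    rcases le_or_gt t 1 with h1 | h1
    · have hlog_np : Real.log t ≤ 0 := Real.log_nonpos ht0.le h1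
      have hneg : -Real.log t ≤ t⁻¹ := by
        have h2 := Real.log_le_sub_one_of_pos (inv_pos.mpr ht0)
        rw [Real.log_inv] at h2
        linarith
      have step : α t * (-Real.log t) ≤ (Qstar * t * t) * t⁻¹ :=
        mul_le_mul hα2 hneg (by linarith) (by positivity)
      have heq : (Qstar * t * t) * t⁻¹ = Qstar * t := by field_simp
      have heq2 : -α t * Real.log t = α t * (-Real.log t) := by ring
      have hQt : Qstar * t ≤ Qstar * 1 := mul_le_mul_of_nonneg_left h1 hQ
      linarith
    · have hlog_nn : 0 ≤ Real.log t := Real.log_nonneg h1.le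
      nlinarith
  have htL : t * |Real.log t| ≤ L := by
    rcases le_or_gt t 1 with h1 | h1
    · have hlg : |Real.log t| = -Real.log t := abs_of_nonpos (Real.log_nonpos ht0.le h1)
      have hneg : -Real.log t ≤ t⁻¹ := by
        have h2 := Real.log_le_sub_one_of_pos (inv_pos.mpr ht0)
        rw [Real.log_inv] at h2
        linarith
      have : t * |Real.log t| ≤ t * t⁻¹ := by
        rw [hlg]; exact mul_le_mul_of_nonneg_left hneg ht0.le
      rw [mul_inv_cancel₀ ht0.ne'] at this
      have h3 : 0 ≤ T * (1 + |Real.log T|) := by positivity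
      simp only [hLdef]; linarith
    · have h1T : (1:ℝ) ≤ T := le_trans h1.le htT
      have hlg : |Real.log t| = Real.log t := abs_of_nonneg (Real.log_nonneg h1.le)
      have hlt : Real.log t ≤ Real.log T := Real.log_le_log ht0 htT
      have hltT : |Real.log t| ≤ 1 + |Real.log T| := by
        rw [hlg]; calc Real.log t ≤ Real.log T := hlt
          _ ≤ |Real.log T| := le_abs_self _
          _ ≤ 1 + |Real.log T| := by linarith
      have hmul : t * |Real.log t| ≤ T * (1 + |Real.log T|) :=
        mul_le_mul htT hltT (abs_nonneg _) hT.le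
      simp only [hLdef]; linarith
  have hu : |(-α' t * Real.log t + -α t * t⁻¹)| ≤ B := by
    refine le_trans (abs_add_le _ _) ?_
    have h_a : |(-α' t) * Real.log t| ≤ Qstar * L := by
      rw [abs_mul, abs_neg]
      calc |α' t| * |Real.log t| ≤ (Qstar * t) * |Real.log t| :=
            mul_le_mul_of_nonneg_right (hα'b t htmem) (abs_nonneg _)
        _ = Qstar * (t * |Real.log t|) := by ring
        _ ≤ Qstar * L := mul_le_mul_of_nonneg_left htL hQ
    have h_b : |(-α t) * t⁻¹| ≤ Qstar * T := by
      rw [abs_mul, abs_neg, abs_of_pos (inv_pos.mpr ht0)]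
      calc |α t| * t⁻¹ ≤ (Qstar * t * t) * t⁻¹ :=
            mul_le_mul_of_nonneg_right (hαb t htmem) (by positivity)
        _ = Qstar * t := by field_simp
        _ ≤ Qstar * T := mul_le_mul_of_nonneg_left htT hQ
    exact add_le_add h_a h_b
  have hDub : |Real.Gamma (1 - α t)| ≤ G := by
    have := hG _ hKt; rwa [Real.norm_eq_abs] at this
  have hcD : c ≤ Real.Gamma (1 - α t) := isMinOn_iff.mp hx₀min _ hKt
  have hφb : |φ (1 - α t)| ≤ M := by
    have := hM _ hKt; rwa [Real.norm_eq_abs] at this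
  have hα'T : |α' t| ≤ Qstar * T :=
    (hα'b t htmem).trans (mul_le_mul_of_nonneg_left htT hQ)
  -- put things together
  rw [abs_div, abs_of_nonneg (sq_nonneg (Real.Gamma (1 - α t)))]
  have hc2 : c ^ 2 ≤ Real.Gamma (1 - α t) ^ 2 := pow_le_pow_left₀ hc.le hcD 2
  have hnum : |Real.exp (-α t * Real.log t) * (-α' t * Real.log t + -α t * t⁻¹) *
        Real.Gamma (1 - α t) -
        Real.exp (-α t * Real.log t) * (φ (1 - α t) * (0 - α' t))| ≤
      Real.exp Qstar * B * G + Real.exp Qstar * (M * (Qstar * T)) := by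
    refine le_trans (abs_sub _ _) (add_le_add ?_ ?_)
    · rw [abs_mul, abs_mul, Real.abs_exp]
      exact mul_le_mul (mul_le_mul hNle hu (abs_nonneg _) (Real.exp_pos _).le) hDub
        (abs_nonneg _) (mul_nonneg (Real.exp_pos _).le hB0)
    · rw [abs_mul, abs_mul, Real.abs_exp, zero_sub, abs_neg]
      exact mul_le_mul hNle
        (mul_le_mul hφb hα'T (abs_nonneg _) hM0)
        (mul_nonneg (abs_nonneg _) (abs_nonneg _)) (Real.exp_pos _).le
  calc _ ≤ (Real.exp Qstar * B * G + Real.exp Qstar * (M * (Qstar * T))) / c ^ 2 := by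
        refine div_le_div₀ ?_ hnum (by positivity) hc2
        have h1 : 0 ≤ Real.exp Qstar * B * G :=
          mul_nonneg (mul_nonneg (Real.exp_pos _).le hB0) hG0
        have h2 : 0 ≤ Real.exp Qstar * (M * (Qstar * T)) :=
          mul_nonneg (Real.exp_pos _).le (mul_nonneg hM0 (mul_nonneg hQ hT.le))
        linarith
    _ ≤ Q := by simp only [hQdef]; linarith
end
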